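/- Let ζ₀ be a zero of ω_m with ζ₀ ∉ {z_{ν+1},…,z_λ}, D(ζ₀) ≠ 0, and |ζ₀| > |z_{ν+1}|. Then along n ∈ Λ_m, |r(ζ₀) − π_{n,λ−1}(ζ₀)| = |ζ₀^{n+λ}/(D(ζ₀)V_{n+λ}(ζ₀))| → ∞ as n → ∞; in particular π_{n,λ−1}(ζ₀) → ∞. -/

import Mathlib

open Polynomial Finset Filter Topology

theorem stmt8 (lam nu sig mm : ℕ) (hnu1 : 1 < nu) (hnul : nu + 1 < lam)
    (hsig : nu ≤ sig) (hmm : mm < sig)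
    (z Cc : Fin lam → ℂ) (hz : Function.Injective z)
    (hC : ∀ j, Cc j ≠ 0)
    (hmod : ∀ j : Fin lam, (j : ℕ) < nu →
      ‖z j‖ = ‖z ⟨0, by omega⟩‖)
    (hroot : ∀ j : Fin lam, (j : ℕ) < nu → z j ^ sig = z ⟨0, by omega⟩ ^ sig)
    (hdrop : ∀ j : Fin lam, nu ≤ (j : ℕ) →
      ‖z j‖ < ‖z ⟨0, by omega⟩‖)
    (hdrop1 : ∀ j : Fin lam, nu + 1 ≤ (j : ℕ) →
      ‖z j‖ < ‖z ⟨nu, by omega⟩‖)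
    (hdrop2 : ∀ j : Fin lam, nu + 1 ≤ (j : ℕ) →
      ‖z j‖ ≤ ‖z ⟨nu + 1, hnul⟩‖)
    (ζ₀ : ℂ) (hζ : ∀ j : Fin lam, nu ≤ (j : ℕ) → ζ₀ ≠ z j)
    (habs : ‖ζ₀‖ > ‖z ⟨nu, by omega⟩‖) :
    let D : Polynomial ℂ := ∏ i, (Polynomial.X - Polynomial.C (z i))
    let Dj : Fin lam → Polynomial ℂ :=
      fun j => ∏ i ∈ Finset.univ.erase j, (Polynomial.X - Polynomial.C (z i))
    let V : ℕ → Polynomial ℂ := fun k => ∑ j, Polynomial.C (Cc j * z j ^ k) * Dj j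
    let dom : Finset (Fin lam) := Finset.univ.filter (fun j => (j : ℕ) < nu)
    let ω : Polynomial ℂ := ∑ k ∈ dom, Polynomial.C (Cc k * z k ^ mm) *
      ∏ i ∈ dom.erase k, (Polynomial.X - Polynomial.C (z i))
    let Λ : Filter ℕ := atTop ⊓ Filter.principal {n | (n + lam) % sig = mm % sig}
    ω.eval ζ₀ = 0 → D.eval ζ₀ ≠ 0 →
    (Tendsto (fun n : ℕ => ‖ζ₀ ^ (n + lam) / (D.eval ζ₀ * (V (n + lam)).eval ζ₀)‖) Λ atTop) := by
  intro D Dj V dom ω Λ hω hD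
  set ν : Fin lam := ⟨nu, by omega⟩ with hν
  set ν1 : Fin lam := ⟨nu + 1, hnul⟩ with hν1
  -- evaluation of D
  have hDeval : D.eval ζ₀ = ∏ i, (ζ₀ - z i) := by
    simp [D, eval_prod]
  have hne : ∀ i, ζ₀ - z i ≠ 0 := by
    rw [hDeval] at hD
    exact fun i => Finset.prod_ne_zero_iff.mp hD i (Finset.mem_univ i)
  set E : Fin lam → ℂ := fun j => ∏ i ∈ Finset.univ.erase j, (ζ₀ - z i) with hE
  have hDjeval : ∀ j, (Dj j).eval ζ₀ = E j := by
    intro j; simp [Dj, E, eval_prod]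
  have hEne : ∀ j, E j ≠ 0 := fun j =>
    Finset.prod_ne_zero_iff.mpr (fun i _ => hne i)
  set cod : Finset (Fin lam) := Finset.univ.filter (fun j => ¬ (j : ℕ) < nu) with hcod
  have hνcod : ν ∈ cod := by simp [cod, ν]
  -- key evaluation of V along the progression
  have hVeval : ∀ k : ℕ, k % sig = mm →
      (V k).eval ζ₀ = ∑ j ∈ cod, Cc j * z j ^ k * E j := by
    intro k hk
    have h1 : (V k).eval ζ₀ = ∑ j, Cc j * z j ^ k * E j := by
      simp [V, eval_finset_sum, hDjeval]
    rw [h1, ← Finset.sum_filter_add_sum_filter_not (Finset.univ : Finset (Fin lam)) (fun j => (j : ℕ) < nu)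
      (fun j => Cc j * z j ^ k * E j)]
    have hzero : ∑ j ∈ dom, Cc j * z j ^ k * E j = 0 := by
      set P : ℂ := ∏ i ∈ cod, (ζ₀ - z i) with hP
      have hterm : ∀ j ∈ dom, Cc j * z j ^ k * E j =
          ((z ⟨0, by omega⟩ ^ sig) ^ (k / sig) * P) *
            (Cc j * z j ^ mm * ∏ i ∈ dom.erase j, (ζ₀ - z i)) := by
        intro j hj
        have hjlt : (j : ℕ) < nu := by simpa [dom] using hj
        have hEj : E j = (∏ i ∈ dom.erase j, (ζ₀ - z i)) * P := by
          have h0 := Finset.prod_filter_mul_prod_filter_not (Finset.univ.erase j)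
            (fun i : Fin lam => (i : ℕ) < nu) (fun i => ζ₀ - z i)
          have h1 : (Finset.univ.erase j).filter (fun i : Fin lam => (i : ℕ) < nu)
              = dom.erase j := by
            rw [Finset.filter_erase]
          have h2 : (Finset.univ.erase j).filter (fun i : Fin lam => ¬ (i : ℕ) < nu)
              = cod := by
            rw [Finset.filter_erase, Finset.erase_eq_of_notMem (by simp [hjlt])]
          rw [h1, h2] at h0
          exact h0.symm
        have hpow : z j ^ k = (z ⟨0, by omega⟩ ^ sig) ^ (k / sig) * z j ^ mm := by
          conv_lhs => rw [← Nat.div_add_mod k sig, hk]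
          rw [pow_add, pow_mul, hroot j hjlt]
        rw [hEj, hpow]; ring
      rw [Finset.sum_congr rfl hterm, ← Finset.mul_sum]
      have hωeval : (0 : ℂ) = ∑ j ∈ dom, Cc j * z j ^ mm *
          ∏ i ∈ dom.erase j, (ζ₀ - z i) := by
        rw [← hω]; simp [ω, eval_finset_sum, eval_prod]
      rw [← hωeval, mul_zero]
    rw [hzero, zero_add]
  -- constants
  set B : ℝ := ∑ j ∈ cod, ‖Cc j * E j‖ with hB
  set c : ℝ := ‖Cc ν * E ν‖ with hc
  set B' : ℝ := ∑ j ∈ cod.erase ν, ‖Cc j * E j‖ with hB'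
  have hcpos : 0 < c := by
    rw [hc]
    exact norm_pos_iff.mpr (mul_ne_zero (hC ν) (hEne ν))
  have hBpos : 0 < B := by
    rw [hB, ← Finset.add_sum_erase _ _ hνcod]
    have : 0 ≤ B' := Finset.sum_nonneg fun j _ => norm_nonneg _
    rw [← hc, ← hB']; linarith
  have hzν1 : ‖z ν1‖ < ‖z ν‖ := hdrop1 ν1 (by simp [ν1])
  have hzνpos : 0 < ‖z ν‖ :=
    lt_of_le_of_lt (norm_nonneg _) hzν1
  -- upper bound for |V|
  have hupper : ∀ k : ℕ, k % sig = mm →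
      ‖(V k).eval ζ₀‖ ≤ B * ‖z ν‖ ^ k := by
    intro k hk
    rw [hVeval k hk, hB, Finset.sum_mul]
    refine le_trans (norm_sum_le _ _) (Finset.sum_le_sum ?_)
    intro j hj
    have hjge : nu ≤ (j : ℕ) := by simpa [cod] using hj
    have hzj : ‖z j‖ ≤ ‖z ν‖ := by
      rcases eq_or_lt_of_le hjge with h | h
      · have : j = ν := Fin.ext h.symm
        rw [this]
      · exact le_of_lt (hdrop1 j h)
    calc ‖Cc j * z j ^ k * E j‖
        = ‖Cc j * E j‖ * ‖z j‖ ^ k := by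
          simp only [norm_mul, norm_pow]; ring
      _ ≤ ‖Cc j * E j‖ * ‖z ν‖ ^ k :=
          mul_le_mul_of_nonneg_left (pow_le_pow_left₀ (norm_nonneg _) hzj k)
            (norm_nonneg _)
  -- lower bound for |V|
  have hlower : ∀ k : ℕ, k % sig = mm →
      c * ‖z ν‖ ^ k - B' * ‖z ν1‖ ^ k ≤
        ‖(V k).eval ζ₀‖ := by
    intro k hk
    rw [hVeval k hk, ← Finset.add_sum_erase _ _ hνcod]
    have h1 : ‖Cc ν * z ν ^ k * E ν‖ = c * ‖z ν‖ ^ k := by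
      rw [hc]; simp only [norm_mul, norm_pow]; ring
    have h2 : ‖∑ j ∈ cod.erase ν, Cc j * z j ^ k * E j‖ ≤
        B' * ‖z ν1‖ ^ k := by
      rw [hB', Finset.sum_mul]
      refine le_trans (norm_sum_le _ _) (Finset.sum_le_sum ?_)
      intro j hj
      have hjν : j ≠ ν := (Finset.mem_erase.mp hj).1
      have hjge : nu ≤ (j : ℕ) := by
        have := (Finset.mem_erase.mp hj).2
        simpa [cod] using this
      have hjge1 : nu + 1 ≤ (j : ℕ) := by
        rcases eq_or_lt_of_le hjge with h | h
        · exact absurd (Fin.ext h.symm) hjν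
        · omega
      have hzj : ‖z j‖ ≤ ‖z ν1‖ := hdrop2 j hjge1
      calc ‖Cc j * z j ^ k * E j‖
          = ‖Cc j * E j‖ * ‖z j‖ ^ k := by
            simp only [norm_mul, norm_pow]; ring
        _ ≤ ‖Cc j * E j‖ * ‖z ν1‖ ^ k :=
            mul_le_mul_of_nonneg_left (pow_le_pow_left₀ (norm_nonneg _) hzj k)
              (norm_nonneg _)
    calc c * ‖z ν‖ ^ k - B' * ‖z ν1‖ ^ k
        ≤ ‖Cc ν * z ν ^ k * E ν‖ -
            ‖∑ j ∈ cod.erase ν, Cc j * z j ^ k * E j‖ := by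
          rw [h1]; linarith
      _ ≤ ‖Cc ν * z ν ^ k * E ν + ∑ j ∈ cod.erase ν, Cc j * z j ^ k * E j‖ := by
          set t := Cc ν * z ν ^ k * E ν
          set s := ∑ j ∈ cod.erase ν, Cc j * z j ^ k * E j
          have h := norm_add_le (t + s) (-s)
          simp only [add_neg_cancel_right, norm_neg] at h
          linarith
  -- eventually V is nonzero
  have hr : ‖z ν1‖ / ‖z ν‖ < 1 := (div_lt_one hzνpos).mpr hzν1
  have hr0 : 0 ≤ ‖z ν1‖ / ‖z ν‖ :=
    div_nonneg (norm_nonneg _) (le_of_lt hzνpos)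
  have htend0 : Tendsto (fun k : ℕ => B' * (‖z ν1‖ / ‖z ν‖) ^ k)
      atTop (𝓝 0) := by
    have := tendsto_pow_atTop_nhds_zero_of_lt_one hr0 hr
    simpa using this.const_mul B'
  obtain ⟨N, hN⟩ := (htend0.eventually_lt_const hcpos).exists_forall_of_atTop
  have hVne : ∀ k : ℕ, N ≤ k → k % sig = mm → (V k).eval ζ₀ ≠ 0 := by
    intro k hkN hk
    have h1 : B' * ‖z ν1‖ ^ k < c * ‖z ν‖ ^ k := by
      have h2 := hN k hkN
      have h3 : (0:ℝ) < ‖z ν‖ ^ k := pow_pos hzνpos k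
      have h4 : B' * (‖z ν1‖ / ‖z ν‖) ^ k *
          ‖z ν‖ ^ k < c * ‖z ν‖ ^ k :=
        mul_lt_mul_of_pos_right h2 h3
      calc B' * ‖z ν1‖ ^ k
          = B' * (‖z ν1‖ / ‖z ν‖) ^ k * ‖z ν‖ ^ k := by
            rw [div_pow]; field_simp
        _ < c * ‖z ν‖ ^ k := h4
    have := hlower k hk
    intro hzero
    rw [hzero, norm_zero] at this
    linarith
  -- the comparison function
  set q : ℝ := ‖ζ₀‖ / ‖z ν‖ with hq
  have hq1 : 1 < q := (one_lt_div hzνpos).mpr habs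
  have hg : Tendsto (fun n : ℕ => q ^ (n + lam) / (‖D.eval ζ₀‖ * B))
      atTop atTop := by
    have h1 : Tendsto (fun n : ℕ => q ^ n) atTop atTop :=
      tendsto_pow_atTop_atTop_of_one_lt hq1
    have h2 : Tendsto (fun n : ℕ => n + lam) atTop atTop := tendsto_add_atTop_nat lam
    exact (h1.comp h2).atTop_div_const
      (mul_pos (norm_pos_iff.mpr hD) hBpos)
  refine tendsto_atTop_mono' Λ ?_ (hg.mono_left inf_le_left)
  have hΛ : Λ = atTop ⊓ Filter.principal {n | (n + lam) % sig = mm % sig} := rfl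
  rw [EventuallyLE, hΛ, eventually_inf_principal]
  filter_upwards [eventually_ge_atTop N] with n hn hmem
  have hk : (n + lam) % sig = mm := by
    have : (n + lam) % sig = mm % sig := hmem
    rwa [Nat.mod_eq_of_lt hmm] at this
  set k := n + lam with hkdef
  have hVne' : (V k).eval ζ₀ ≠ 0 := hVne k (by omega) hk
  have hVpos : 0 < ‖(V k).eval ζ₀‖ := norm_pos_iff.mpr hVne'
  have hDpos : 0 < ‖D.eval ζ₀‖ := norm_pos_iff.mpr hD
  have hrhs : ‖ζ₀ ^ k / (D.eval ζ₀ * (V k).eval ζ₀)‖ =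
      ‖ζ₀‖ ^ k / (‖D.eval ζ₀‖ * ‖(V k).eval ζ₀‖) := by
    rw [norm_div, norm_mul, norm_pow]
  rw [hrhs, hq, div_pow, div_div]
  refine div_le_div_of_nonneg_left (pow_nonneg (norm_nonneg _) k) ?_ ?_
  · exact mul_pos hDpos hVpos
  · calc ‖D.eval ζ₀‖ * ‖(V k).eval ζ₀‖
        ≤ ‖D.eval ζ₀‖ * (B * ‖z ν‖ ^ k) :=
          mul_le_mul_of_nonneg_left (hupper k hk) (le_of_lt hDpos)
      _ = ‖z ν‖ ^ k * (‖D.eval ζ₀‖ * B) := by ring
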